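/- Let n ≥ 3, 0 ≤ t_2 ≤ n−1, and 1 ≤ i_1, i_2 ≤ n−2 with i_1 = 1. Let P = {α ∈ ℕ^n : |α| = n, α_1 ≤ 2, (cyclic window sum of length i_2 starting at t_2+1 of α) ≤ i_2 + 1}. Then there exist subsets C_1,...,C_n ⊆ [n] with P = {Σ_{k=1}^n e_{j_k} : j_k ∈ C_k}. -/

import Mathlib

open Finset




lemma myForward (n : ℕ) (C : Fin n → Finset (Fin n)) (α : Fin n → ℕ)
    (hsum : ∑ v, α v = n)
    (hall : ∀ J : Finset (Fin n), ∑ v ∈ J, α v ≤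
      (univ.filter (fun k => ∃ v ∈ J, v ∈ C k)).card) :
    ∃ j : Fin n → Fin n, (∀ k, j k ∈ C k) ∧ α = ∑ k, Pi.single (j k) 1 := by
  classical
  have hcard : Fintype.card (Σ v : Fin n, Fin (α v)) = n := by
    simp [Fintype.card_sigma, hsum]
  have hHall : ∀ s : Finset (Σ v : Fin n, Fin (α v)),
      s.card ≤ (s.biUnion (fun p => univ.filter (fun k => p.1 ∈ C k))).card := by
    intro s
    have h1 : s.biUnion (fun p => univ.filter (fun k => p.1 ∈ C k))
        = univ.filter (fun k => ∃ v ∈ s.image Sigma.fst, v ∈ C k) := by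
      ext k
      simp only [mem_biUnion, mem_filter, mem_univ, true_and, mem_image]
      constructor
      · rintro ⟨p, hp, hpc⟩; exact ⟨p.1, ⟨p, hp, rfl⟩, hpc⟩
      · rintro ⟨v, ⟨p, hp, rfl⟩, hvc⟩; exact ⟨p, hp, hvc⟩
    have h2 : s.card ≤ ∑ v ∈ s.image Sigma.fst, α v := by
      calc s.card ≤ ((s.image Sigma.fst).sigma fun v => (univ : Finset (Fin (α v)))).card := by
            apply card_le_card
            intro p hp
            rw [mem_sigma]
            exact ⟨mem_image_of_mem _ hp, mem_univ _⟩
        _ = ∑ v ∈ s.image Sigma.fst, α v := by simp [card_sigma]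
    rw [h1]
    exact h2.trans (hall _)
  obtain ⟨f, hfinj, hfmem⟩ :=
    (Finset.all_card_le_biUnion_card_iff_exists_injective _).mp hHall
  have hbij : Function.Bijective f := by
    rw [Fintype.bijective_iff_injective_and_card]
    exact ⟨hfinj, by simp [hcard]⟩
  let e := Equiv.ofBijective f hbij
  refine ⟨fun k => (e.symm k).1, ?_, ?_⟩
  · intro k
    have h := hfmem (e.symm k)
    rw [mem_filter] at h
    have heq : f (e.symm k) = k := e.apply_symm_apply k
    rw [heq] at h
    exact h.2
  · funext v
    show α v = (∑ k, Pi.single ((e.symm k).1) 1 : Fin n → ℕ) v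
    have hs : (∑ k, Pi.single ((e.symm k).1) 1 : Fin n → ℕ) v
        = (univ.filter fun k => v = (e.symm k).1).card := by
      rw [Finset.sum_apply, Finset.card_filter]
      congr 1; funext k
      rw [Pi.single_apply]
    rw [hs]
    have hb : (univ.filter fun k => v = (e.symm k).1).card
        = (univ.filter fun p : (Σ v : Fin n, Fin (α v)) => v = p.1).card := by
      apply Finset.card_bij (fun k _ => e.symm k)
      · intro k hk; rw [mem_filter] at hk ⊢; exact ⟨mem_univ _, hk.2⟩
      · intro a _ b _ h; exact e.symm.injective h
      · intro p hp
        refine ⟨e p, ?_, by simp⟩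
        rw [mem_filter] at hp ⊢
        simp [hp.2]
    rw [hb]
    have : (univ.filter fun p : (Σ v : Fin n, Fin (α v)) => v = p.1).card = α v := by
      rw [← Fintype.card_fin (α v)]
      apply Finset.card_bij (fun (p : Σ v : Fin n, Fin (α v)) (hp : p ∈ _) =>
        (Fin.cast (by rw [(mem_filter.mp hp).2]) p.2 : Fin (α v)))
      · intro p hp; exact mem_univ _
      · intro p hp q hq h
        have h1 := (mem_filter.mp hp).2
        have h2 := (mem_filter.mp hq).2
        obtain ⟨a, x⟩ := p; obtain ⟨b, y⟩ := q
        simp only at h1 h2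
        subst h1; subst h2
        simpa [Fin.ext_iff] using h
      · intro x hx
        refine ⟨⟨v, x⟩, by simp, rfl⟩
    rw [this]




lemma myCardVal (n : ℕ) (p : ℕ → Prop) [DecidablePred p] :
    (univ.filter (fun k : Fin n => p k.val)).card = ((range n).filter p).card := by
  rw [Finset.card_filter, Finset.card_filter, Fin.sum_univ_eq_sum_range (fun k => if p k then 1 else 0)]

lemma myCardLt (n b : ℕ) (h : b ≤ n) :
    (univ.filter (fun k : Fin n => k.val < b)).card = b := by
  rw [myCardVal n (fun k => k < b)]
  have : (range n).filter (fun k => k < b) = range b := by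
    ext x; simp only [mem_filter, mem_range]; omega
  rw [this, card_range]

lemma myCardIco (n a b : ℕ) (h : b ≤ n) (h2 : a ≤ b) :
    (univ.filter (fun k : Fin n => a ≤ k.val ∧ k.val < b)).card = b - a := by
  rw [myCardVal n (fun k => a ≤ k ∧ k < b)]
  have : (range n).filter (fun k => a ≤ k ∧ k < b) = Finset.Ico a b := by
    ext x; simp only [mem_filter, mem_range, mem_Ico]; omega
  rw [this, Nat.card_Ico]

lemma myCardNe (n : ℕ) (h : 1 < n) :
    (univ.filter (fun k : Fin n => ¬ (k.val = 1))).card = n - 1 := by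
  rw [myCardVal n (fun k => ¬ (k = 1))]
  have : (range n).filter (fun k => ¬ (k = 1)) = (range n).erase 1 := by
    ext x; simp only [mem_filter, mem_range, mem_erase]; omega
  rw [this, Finset.card_erase_of_mem (mem_range.mpr h), card_range]




lemma myCount (n : ℕ) (j : Fin n → Fin n) (S : Finset (Fin n)) :
    ∑ v ∈ S, (∑ k, Pi.single (j k) 1 : Fin n → ℕ) v
      = (univ.filter fun k => j k ∈ S).card := by
  classical
  rw [Finset.card_filter]
  simp only [Finset.sum_apply, Pi.single_apply]
  rw [Finset.sum_comm]
  apply Finset.sum_congr rfl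
  intro k _
  simp [Finset.sum_ite_eq]

lemma myAbstract (n i2 : ℕ) (hi2n : i2 + 1 ≤ n) (z : Fin n) (W : Finset (Fin n))
    (C : Fin n → Finset (Fin n))
    (h1 : 2 ≤ (univ.filter fun k => z ∈ C k).card)
    (h2 : ∀ v ∈ W, v ≠ z → i2 + 1 ≤ (univ.filter fun k => v ∈ C k).card)
    (h3 : ∀ v : Fin n, v ∉ W → v ≠ z → ∀ k, v ∈ C k)
    (h4 : z ∉ W → ∀ v ∈ W, min n (i2 + 3) ≤ (univ.filter fun k => z ∈ C k ∨ v ∈ C k).card)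
    (hzc : (univ.filter fun k => z ∈ C k).card ≤ 2)
    (hWc : (univ.filter fun k => ∃ v ∈ W, v ∈ C k).card ≤ i2 + 1) :
    {α : Fin n → ℕ | ∑ k, α k = n ∧ α z ≤ 2 ∧ ∑ k ∈ W, α k ≤ i2 + 1} =
    {α : Fin n → ℕ | ∃ j : Fin n → Fin n, (∀ k, j k ∈ (C k : Set (Fin n))) ∧
        α = ∑ k, Pi.single (j k) 1} := by
  classical
  ext α
  simp only [Set.mem_setOf_eq]
  constructor
  · rintro ⟨hsum, hz, hW⟩
    have hall : ∀ J : Finset (Fin n), ∑ v ∈ J, α v ≤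
        (univ.filter (fun k => ∃ v ∈ J, v ∈ C k)).card := by
      intro J
      -- monotone helper
      have mono : ∀ (p : Fin n → Prop) [DecidablePred p], (∀ k, p k → ∃ v ∈ J, v ∈ C k) →
          (univ.filter p).card ≤ (univ.filter (fun k => ∃ v ∈ J, v ∈ C k)).card := by
        intro p _ hp
        apply card_le_card
        intro k hk
        rw [mem_filter] at hk ⊢
        exact ⟨mem_univ _, hp k hk.2⟩
      by_cases hout : ∃ v ∈ J, v ∉ W ∧ v ≠ z
      · obtain ⟨v, hvJ, hvW, hvz⟩ := hout
        have hfull : (univ.filter fun k => ∃ u ∈ J, u ∈ C k) = univ := by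
          apply Finset.eq_univ_of_forall
          intro k
          rw [mem_filter]
          exact ⟨mem_univ _, v, hvJ, h3 v hvW hvz k⟩
        rw [hfull, card_univ, Fintype.card_fin]
        calc ∑ v ∈ J, α v ≤ ∑ v, α v := Finset.sum_le_sum_of_subset (subset_univ J)
          _ = n := hsum
      · push_neg at hout
        have hmem : ∀ u ∈ J, u ∈ W ∨ u = z := by
          intro u hu
          by_cases h : u ∈ W
          · exact Or.inl h
          · exact Or.inr (hout u hu h)
        -- every element of J is in W or equals z
        by_cases hzJ : z ∈ J ∧ z ∉ W
        · by_cases hWJ : ∃ v ∈ J, v ∈ W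
          · obtain ⟨v, hvJ, hvW⟩ := hWJ
            have hvz : v ≠ z := fun h => hzJ.2 (h ▸ hvW)
            have hb1 : ∑ u ∈ J, α u ≤ n := by
              calc ∑ u ∈ J, α u ≤ ∑ u, α u := Finset.sum_le_sum_of_subset (subset_univ J)
                _ = n := hsum
            have hb2 : ∑ u ∈ J, α u ≤ i2 + 3 := by
              have hJ : J ⊆ insert z W := by
                intro u hu
                rcases hmem u hu with h | h
                · exact mem_insert.mpr (Or.inr h)
                · exact mem_insert.mpr (Or.inl h)
              calc ∑ u ∈ J, α u ≤ ∑ u ∈ insert z W, α u :=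
                    Finset.sum_le_sum_of_subset hJ
                _ = α z + ∑ u ∈ W, α u := Finset.sum_insert hzJ.2
                _ ≤ 2 + (i2 + 1) := Nat.add_le_add hz hW
                _ = i2 + 3 := by omega
            have := h4 hzJ.2 v hvW
            have hle := mono (fun k => z ∈ C k ∨ v ∈ C k) ?_
            · calc ∑ u ∈ J, α u ≤ min n (i2 + 3) := le_min hb1 hb2
                _ ≤ _ := this.trans hle
            · intro k hk
              rcases hk with h | h
              · exact ⟨z, hzJ.1, h⟩
              · exact ⟨v, hvJ, h⟩
          · -- no element of J in W, z ∈ J : J = {z}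
            have hJz : J ⊆ {z} := by
              intro u hu
              rcases hmem u hu with h | h
              · exact absurd ⟨u, hu, h⟩ hWJ
              · simp [h]
            have hle := mono (fun k => z ∈ C k) (fun k hk => ⟨z, hzJ.1, hk⟩)
            calc ∑ u ∈ J, α u ≤ ∑ u ∈ {z}, α u := Finset.sum_le_sum_of_subset hJz
              _ = α z := Finset.sum_singleton _ _
              _ ≤ 2 := hz
              _ ≤ _ := h1.trans hle
        · -- z ∉ J or z ∈ W ; so J ⊆ W ∪ (if z ∈ W then ∅ hm) -- J ⊆ W unless elements = z with z ∉ W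
          rcases J.eq_empty_or_nonempty with rfl | hne
          · simp
          by_cases hv : ∃ v ∈ J, v ≠ z
          · obtain ⟨v, hvJ, hvz⟩ := hv
            have hvW : v ∈ W := by
              rcases hmem v hvJ with h | h
              · exact h
              · exact absurd h hvz
            have hJW : J ⊆ W := by
              intro u hu
              rcases hmem u hu with h | h
              · exact h
              · subst h
                by_contra huW
                exact hzJ ⟨hu, huW⟩
            have hle := mono (fun k => v ∈ C k) (fun k hk => ⟨v, hvJ, hk⟩)
            calc ∑ u ∈ J, α u ≤ ∑ u ∈ W, α u := Finset.sum_le_sum_of_subset hJW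
              _ ≤ i2 + 1 := hW
              _ ≤ _ := (h2 v hvW hvz).trans hle
          · push_neg at hv
            obtain ⟨u, hu⟩ := hne
            have hJz : J = {z} := by
              apply Finset.eq_singleton_iff_unique_mem.mpr
              exact ⟨(hv u hu) ▸ hu, fun x hx => hv x hx⟩
            subst hJz
            have hle := mono (fun k => z ∈ C k) (fun k hk => ⟨z, mem_singleton_self z, hk⟩)
            rw [Finset.sum_singleton]
            exact hz.trans (h1.trans hle)
    obtain ⟨j, hj1, hj2⟩ := myForward n C α hsum hall
    exact ⟨j, fun k => Finset.mem_coe.mpr (hj1 k), hj2⟩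
  · rintro ⟨j, hj1, hj2⟩
    subst hj2
    have hj1' : ∀ k, j k ∈ C k := fun k => hj1 k
    refine ⟨?_, ?_, ?_⟩
    · have := myCount n j univ
      simp only [mem_univ, filter_true] at this
      rw [this, card_univ, Fintype.card_fin]
    · have := myCount n j {z}
      rw [Finset.sum_singleton] at this
      rw [this]
      calc (univ.filter fun k => j k ∈ ({z} : Finset (Fin n))).card
          ≤ (univ.filter fun k => z ∈ C k).card := by
            apply card_le_card
            intro k hk
            rw [mem_filter] at hk ⊢
            have : j k = z := by simpa using hk.2
            exact ⟨mem_univ _, this ▸ hj1' k⟩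
        _ ≤ 2 := hzc
    · rw [myCount n j W]
      calc (univ.filter fun k => j k ∈ W).card
          ≤ (univ.filter fun k => ∃ v ∈ W, v ∈ C k).card := by
            apply card_le_card
            intro k hk
            rw [mem_filter] at hk ⊢
            exact ⟨mem_univ _, j k, hk.2, hj1' k⟩
        _ ≤ i2 + 1 := hWc
theorem stmt14 (n i1 i2 t2 : ℕ) (hn : 3 ≤ n) (ht2 : t2 ≤ n - 1)
    (hi1 : i1 = 1) (hi1b : i1 ≤ n - 2) (hi2a : 1 ≤ i2) (hi2b : i2 ≤ n - 2) :
    ∃ C : Fin n → Set (Fin n),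
      {α : Fin n → ℕ | ∑ k, α k = n ∧
        ∑ k ∈ Finset.univ.filter (fun m : Fin n => m.val < i1), α k ≤ i1 + 1 ∧
        ∑ k ∈ Finset.univ.filter (fun m : Fin n =>
            (t2 ≤ m.val ∧ m.val < t2 + i2) ∨ (n < t2 + i2 ∧ m.val < i2 + t2 - n)), α k
          ≤ i2 + 1} =
      {α : Fin n → ℕ | ∃ j : Fin n → Fin n, (∀ k, j k ∈ C k) ∧ α = ∑ k, Pi.single (j k) 1} := by
  classical
  subst hi1
  have hn0 : 0 < n := by omega
  set z : Fin n := ⟨0, hn0⟩ with hzdef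
  set W : Finset (Fin n) := Finset.univ.filter (fun m : Fin n =>
      (t2 ≤ m.val ∧ m.val < t2 + i2) ∨ (n < t2 + i2 ∧ m.val < i2 + t2 - n)) with hWdef
  have hfilter1 : Finset.univ.filter (fun m : Fin n => m.val < 1) = {z} := by
    ext m
    have hz0 : z.val = 0 := rfl
    simp only [mem_filter, mem_univ, true_and, mem_singleton, Fin.ext_iff]
    exact ⟨fun h => by omega, fun h => by omega⟩
  have hset : {α : Fin n → ℕ | ∑ k, α k = n ∧
        ∑ k ∈ Finset.univ.filter (fun m : Fin n => m.val < 1), α k ≤ 1 + 1 ∧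
        ∑ k ∈ W, α k ≤ i2 + 1} =
      {α : Fin n → ℕ | ∑ k, α k = n ∧ α z ≤ 2 ∧ ∑ k ∈ W, α k ≤ i2 + 1} := by
    ext α
    rw [Set.mem_setOf_eq, Set.mem_setOf_eq, hfilter1, Finset.sum_singleton]
  rw [hset]
  -- three cases
  by_cases hzW : z ∈ W
  · -- case A
    set C : Fin n → Finset (Fin n) := fun k =>
      if k.val < 2 then univ else if k.val < i2 + 1 then {z}ᶜ else Wᶜ with hCdef
    refine ⟨fun k => (C k : Set (Fin n)), ?_⟩
    have ez : (univ.filter fun k : Fin n => z ∈ C k)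
        = univ.filter (fun k : Fin n => k.val < 2) := by
      apply filter_congr
      intro k _
      simp only [hCdef]
      split_ifs with h h'
      · simp [h]
      · simp [Finset.mem_compl, h]
      · simp [Finset.mem_compl, hzW, h]
    have hcz : (univ.filter fun k : Fin n => z ∈ C k).card = 2 := by
      rw [ez, myCardLt n 2 (by omega)]
    apply myAbstract n i2 (by omega) z W C
    · exact le_of_eq hcz.symm
    · intro v hvW hvz
      have ev : (univ.filter fun k : Fin n => v ∈ C k)
          = univ.filter (fun k : Fin n => k.val < i2 + 1) := by
        apply filter_congr
        intro k _
        simp only [hCdef]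
        split_ifs with h h'
        · simp only [mem_univ, true_iff]; omega
        · simp [Finset.mem_compl, hvz, h']
        · simp [Finset.mem_compl, hvW, h']
      rw [ev, myCardLt n (i2 + 1) (by omega)]
    · intro v hvW hvz k
      simp only [hCdef]
      split_ifs <;> simp [Finset.mem_compl, hvW, hvz]
    · intro h; exact absurd hzW h
    · exact le_of_eq hcz
    · have hsub : (univ.filter fun k : Fin n => ∃ v ∈ W, v ∈ C k)
          ⊆ univ.filter (fun k : Fin n => k.val < i2 + 1) := by
        intro k hk
        rw [mem_filter] at hk ⊢
        obtain ⟨-, v, hv, hvC⟩ := hk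
        refine ⟨mem_univ _, ?_⟩
        by_contra hge
        have hC : C k = Wᶜ := by
          simp only [hCdef]
          rw [if_neg (by omega), if_neg (by omega)]
        rw [hC, Finset.mem_compl] at hvC
        exact hvC hv
      calc (univ.filter fun k : Fin n => ∃ v ∈ W, v ∈ C k).card
          ≤ (univ.filter (fun k : Fin n => k.val < i2 + 1)).card := card_le_card hsub
        _ = i2 + 1 := myCardLt n (i2 + 1) (by omega)
  · by_cases hbig : i2 + 3 ≤ n
    · -- case B
      set C : Fin n → Finset (Fin n) := fun k =>
        if k.val < 2 then Wᶜ else if k.val < i2 + 3 then {z}ᶜ else (insert z W)ᶜ with hCdef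
      refine ⟨fun k => (C k : Set (Fin n)), ?_⟩
      have ez : (univ.filter fun k : Fin n => z ∈ C k)
          = univ.filter (fun k : Fin n => k.val < 2) := by
        apply filter_congr
        intro k _
        simp only [hCdef]
        split_ifs with h h'
        · simp [Finset.mem_compl, hzW, h]
        · simp [Finset.mem_compl, h]
        · simp [Finset.mem_compl, Finset.mem_insert, h]
      have hcz : (univ.filter fun k : Fin n => z ∈ C k).card = 2 := by
        rw [ez, myCardLt n 2 (by omega)]
      apply myAbstract n i2 (by omega) z W C
      · exact le_of_eq hcz.symm
      · intro v hvW hvz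
        have ev : (univ.filter fun k : Fin n => v ∈ C k)
            = univ.filter (fun k : Fin n => 2 ≤ k.val ∧ k.val < i2 + 3) := by
          apply filter_congr
          intro k _
          simp only [hCdef]
          split_ifs with h h'
          · simp only [Finset.mem_compl, hvW, not_true, false_iff]
            omega
          · simp only [Finset.mem_compl, Finset.mem_singleton, hvz, not_false_iff, true_iff]
            omega
          · simp only [Finset.mem_compl, Finset.mem_insert, hvW, or_true, not_true, false_iff]
            omega
        rw [ev, myCardIco n 2 (i2 + 3) hbig (by omega)]
        omega
      · intro v hvW hvz k
        simp only [hCdef]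
        split_ifs <;> simp [Finset.mem_compl, Finset.mem_insert, hvW, hvz]
      · intro _ v hvW
        have e4 : (univ.filter fun k : Fin n => z ∈ C k ∨ v ∈ C k)
            = univ.filter (fun k : Fin n => k.val < i2 + 3) := by
          apply filter_congr
          intro k _
          have hvz : v ≠ z := fun h => hzW (h ▸ hvW)
          simp only [hCdef]
          split_ifs with h h'
          · simp only [Finset.mem_compl, hzW, not_false_iff, true_or, true_iff]
            omega
          · simp only [Finset.mem_compl, Finset.mem_singleton, hvz, not_false_iff, or_true,
              true_iff]
            omega
          · simp [Finset.mem_compl, Finset.mem_insert, hvW, h']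
        rw [e4, myCardLt n (i2 + 3) hbig]
        exact min_le_right _ _
      · exact le_of_eq hcz
      · have hsub : (univ.filter fun k : Fin n => ∃ v ∈ W, v ∈ C k)
            ⊆ univ.filter (fun k : Fin n => 2 ≤ k.val ∧ k.val < i2 + 3) := by
          intro k hk
          rw [mem_filter] at hk ⊢
          obtain ⟨-, v, hv, hvC⟩ := hk
          refine ⟨mem_univ _, ?_, ?_⟩
          · by_contra hlt
            have hC : C k = Wᶜ := by
              simp only [hCdef]
              rw [if_pos (by omega)]
            rw [hC, Finset.mem_compl] at hvC
            exact hvC hv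
          · by_contra hge
            have hC : C k = (insert z W)ᶜ := by
              simp only [hCdef]
              rw [if_neg (by omega), if_neg (by omega)]
            rw [hC, Finset.mem_compl, Finset.mem_insert] at hvC
            exact hvC (Or.inr hv)
        calc (univ.filter fun k : Fin n => ∃ v ∈ W, v ∈ C k).card
            ≤ (univ.filter (fun k : Fin n => 2 ≤ k.val ∧ k.val < i2 + 3)).card :=
              card_le_card hsub
          _ = i2 + 3 - 2 := myCardIco n 2 (i2 + 3) hbig (by omega)
          _ ≤ i2 + 1 := by omega
    · -- case C : i2 + 2 = n
      have hi2n : i2 + 2 = n := by omega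
      set C : Fin n → Finset (Fin n) := fun k =>
        if k.val < 1 then univ else if k.val < 2 then Wᶜ else {z}ᶜ with hCdef
      refine ⟨fun k => (C k : Set (Fin n)), ?_⟩
      have ez : (univ.filter fun k : Fin n => z ∈ C k)
          = univ.filter (fun k : Fin n => k.val < 2) := by
        apply filter_congr
        intro k _
        simp only [hCdef]
        split_ifs with h h'
        · simp only [mem_univ, true_iff]; omega
        · simp only [Finset.mem_compl, hzW, not_false_iff, true_iff]; omega
        · simp [Finset.mem_compl, h']
      have hcz : (univ.filter fun k : Fin n => z ∈ C k).card = 2 := by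
        rw [ez, myCardLt n 2 (by omega)]
      apply myAbstract n i2 (by omega) z W C
      · exact le_of_eq hcz.symm
      · intro v hvW hvz
        have ev : (univ.filter fun k : Fin n => v ∈ C k)
            = univ.filter (fun k : Fin n => ¬ (k.val = 1)) := by
          apply filter_congr
          intro k _
          simp only [hCdef]
          split_ifs with h h'
          · simp only [mem_univ, true_iff]; omega
          · simp only [Finset.mem_compl, hvW, not_true, false_iff, not_not]; omega
          · simp only [Finset.mem_compl, Finset.mem_singleton, hvz, not_false_iff, true_iff]
            omega
        rw [ev, myCardNe n (by omega)]
        omega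
      · intro v hvW hvz k
        simp only [hCdef]
        split_ifs <;> simp [Finset.mem_compl, hvW, hvz]
      · intro _ v hvW
        have hvz : v ≠ z := fun h => hzW (h ▸ hvW)
        have e4 : (univ.filter fun k : Fin n => z ∈ C k ∨ v ∈ C k) = univ := by
          apply eq_univ_of_forall
          intro k
          rw [mem_filter]
          refine ⟨mem_univ _, ?_⟩
          simp only [hCdef]
          split_ifs with h h'
          · exact Or.inl (mem_univ _)
          · exact Or.inl (by simpa [Finset.mem_compl] using hzW)
          · exact Or.inr (by simp [Finset.mem_compl, hvz])
        rw [e4, card_univ, Fintype.card_fin]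
        exact min_le_left _ _
      · exact le_of_eq hcz
      · have hsub : (univ.filter fun k : Fin n => ∃ v ∈ W, v ∈ C k)
            ⊆ univ.filter (fun k : Fin n => ¬ (k.val = 1)) := by
          intro k hk
          rw [mem_filter] at hk ⊢
          obtain ⟨-, v, hv, hvC⟩ := hk
          refine ⟨mem_univ _, ?_⟩
          intro hk1
          have hC : C k = Wᶜ := by
            simp only [hCdef]
            rw [if_neg (by omega), if_pos (by omega)]
          rw [hC, Finset.mem_compl] at hvC
          exact hvC hv
        calc (univ.filter fun k : Fin n => ∃ v ∈ W, v ∈ C k).card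
            ≤ (univ.filter (fun k : Fin n => ¬ (k.val = 1))).card := card_le_card hsub
          _ = n - 1 := myCardNe n (by omega)
          _ ≤ i2 + 1 := by omega
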